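/- arXiv:1412.3314 — 2 statements merged into one kernel-verified Lean document; each statement's English description precedes it below -/
import Mathlib

section
/- Let P₂(x) = (2^{1/3}√3/(12π)) · (2^{1/3}(27 + 3√(81 − 12x))^{2/3} − 6 x^{1/3}) / (x^{2/3}(27 + 3√(81 − 12x))^{1/3}) for x ∈ (0, 27/4]. Then for every integer k ≥ 0, ∫₀^{27/4} x^k P₂(x) dx = (1/(2k+1)) · binom(3k, k). -/
open MeasureTheory Real

section helpers

lemma beta_aux_eqOn (p q : ℝ) : ∀ x ∈ Set.uIcc (0:ℝ) 1,
    ((x:ℂ) ^ ((p:ℂ)-1) * ((1:ℂ)-(x:ℂ)) ^ ((q:ℂ)-1)) = ((x ^ (p-1) * (1-x) ^ (q-1) : ℝ) : ℂ) := by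
  intro x hx
  rw [Set.uIcc_of_le (by norm_num)] at hx
  have h1 : (0:ℝ) ≤ x := hx.1
  have h2 : (0:ℝ) ≤ 1 - x := by linarith [hx.2]
  rw [show ((p:ℂ)-1) = ((p-1:ℝ):ℂ) by push_cast; ring,
    show ((q:ℂ)-1) = ((q-1:ℝ):ℂ) by push_cast; ring,
    show ((1:ℂ) - (x:ℂ)) = ((1-x:ℝ):ℂ) by push_cast; ring,
    ← Complex.ofReal_cpow h1, ← Complex.ofReal_cpow h2]
  push_cast
  ring

lemma betaIntegrable {p q : ℝ} (hp : 0 < p) (hq : 0 < q) :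
    IntervalIntegrable (fun x : ℝ => x ^ (p-1) * (1-x) ^ (q-1)) volume 0 1 := by
  have h := Complex.betaIntegral_convergent (u:=p) (v:=q) (by simpa) (by simpa)
  constructor
  · have h1 : MeasureTheory.IntegrableOn
        (fun x : ℝ => (((x:ℂ) ^ ((p:ℂ)-1) * ((1:ℂ)-(x:ℂ)) ^ ((q:ℂ)-1)).re)) (Set.Ioc (0:ℝ) 1) volume := h.1.re
    apply h1.congr_fun _ measurableSet_Ioc
    intro x hx
    have := beta_aux_eqOn p q x (by rw [Set.uIcc_of_le (by norm_num)]; exact Set.mem_Icc.mpr ⟨le_of_lt hx.1, hx.2⟩)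
    simp [this]
  · simp [MeasureTheory.integrableOn_empty, Set.Ioc_eq_empty, (by norm_num : ¬ (1:ℝ) < 0)]

lemma betaValue {p q : ℝ} (hp : 0 < p) (hq : 0 < q) :
    ∫ x in (0:ℝ)..1, x ^ (p-1) * (1-x) ^ (q-1) = Gamma p * Gamma q / Gamma (p+q) := by
  have h := Complex.Gamma_mul_Gamma_eq_betaIntegral (s:=p) (t:=q) (by simpa) (by simpa)
  rw [Complex.betaIntegral, intervalIntegral.integral_congr (beta_aux_eqOn p q),
    intervalIntegral.integral_ofReal, ← Complex.ofReal_add, Complex.Gamma_ofReal,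
    Complex.Gamma_ofReal, Complex.Gamma_ofReal, ← Complex.ofReal_mul, ← Complex.ofReal_mul] at h
  have := Complex.ofReal_injective h
  have hG : Real.Gamma (p+q) > 0 := Real.Gamma_pos_of_pos (by linarith)
  field_simp
  linarith [this]

lemma bInt {a b : ℝ} (ha : -1 < a) (hb : -1 < b) :
    IntervalIntegrable (fun x : ℝ => x ^ a * (1-x) ^ b) volume 0 1 := by
  have := betaIntegrable (p := a+1) (q := b+1) (by linarith) (by linarith)
  simpa using this

lemma bVal {a b : ℝ} (ha : -1 < a) (hb : -1 < b) :
    ∫ x in (0:ℝ)..1, x ^ a * (1-x) ^ b = Gamma (a+1) * Gamma (b+1) / Gamma (a+b+2) := by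
  have := betaValue (p := a+1) (q := b+1) (by linarith) (by linarith)
  rw [show a+1-1 = a by ring, show b+1-1 = b by ring, show a+1+(b+1) = a+b+2 by ring] at this
  exact this

lemma gamma_prod (k : ℕ) : Real.sqrt 3 * (27:ℝ)^k * (Nat.factorial k : ℝ) *
    (Gamma ((k:ℝ)+1/3) * Gamma ((k:ℝ)+2/3)) = 2 * π * (Nat.factorial (3*k) : ℝ) := by
  induction k with
  | zero =>
    have h := Real.Gamma_mul_Gamma_one_sub (1/3)
    rw [show (1:ℝ) - 1/3 = 2/3 by norm_num, show π * (1/3:ℝ) = π/3 by ring,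
      Real.sin_pi_div_three] at h
    have h33 : Real.sqrt 3 * Real.sqrt 3 = 3 := Real.mul_self_sqrt (by norm_num)
    have h3 : Real.sqrt 3 > 0 := by positivity
    simp only [Nat.cast_zero, pow_zero, Nat.mul_zero, Nat.factorial_zero, Nat.cast_one,
      one_mul, mul_one, zero_add, h]
    field_simp
  | succ k ih =>
    have ha : ((k:ℝ)+1/3) ≠ 0 := by positivity
    have hb : ((k:ℝ)+2/3) ≠ 0 := by positivity
    have e1 : ((k+1:ℕ):ℝ)+1/3 = ((k:ℝ)+1/3) + 1 := by push_cast; ring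
    have e2 : ((k+1:ℕ):ℝ)+2/3 = ((k:ℝ)+2/3) + 1 := by push_cast; ring
    have hf : (Nat.factorial (3*(k+1)) : ℝ)
        = (3*(k:ℝ)+3)*(3*(k:ℝ)+2)*(3*(k:ℝ)+1) * (Nat.factorial (3*k) : ℝ) := by
      rw [show 3*(k+1) = ((3*k)+1)+1+1 by ring, Nat.factorial_succ, Nat.factorial_succ,
        Nat.factorial_succ]
      push_cast; ring
    have hf2 : (Nat.factorial (k+1) : ℝ) = ((k:ℝ)+1) * (Nat.factorial k : ℝ) := by
      rw [Nat.factorial_succ]; push_cast; ring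
    rw [e1, e2, Real.Gamma_add_one ha, Real.Gamma_add_one hb, hf, hf2]
    linear_combination (27*((k:ℝ)+1)*(((k:ℝ))+1/3)*(((k:ℝ))+2/3)) * ih

noncomputable def fcDensity2 (x : ℝ) : ℝ :=
  (2 ^ ((1 : ℝ) / 3) * Real.sqrt 3 / (12 * Real.pi)) *
    (2 ^ ((1 : ℝ) / 3) * (27 + 3 * Real.sqrt (81 - 12 * x)) ^ ((2 : ℝ) / 3)
        - 6 * x ^ ((1 : ℝ) / 3)) /
    (x ^ ((2 : ℝ) / 3) * (27 + 3 * Real.sqrt (81 - 12 * x)) ^ ((1 : ℝ) / 3))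

lemma fcDensity2_comp {u : ℝ} (h1 : 1/2 < u) (h2 : u < 1) :
    fcDensity2 (27*u*(1-u)) = Real.sqrt 3/(18*π) *
      (u ^ (-(1:ℝ)/3) * (1-u) ^ (-(2:ℝ)/3) - u ^ (-(2:ℝ)/3) * (1-u) ^ (-(1:ℝ)/3)) := by
  have hu0 : (0:ℝ) < u := by linarith
  have hv0 : (0:ℝ) < 1 - u := by linarith
  set A := u ^ ((1:ℝ)/3) with hA
  set B := (1-u) ^ ((1:ℝ)/3) with hB
  set c := (2:ℝ) ^ ((1:ℝ)/3) with hc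
  have hA0 : 0 < A := Real.rpow_pos_of_pos hu0 _
  have hB0 : 0 < B := Real.rpow_pos_of_pos hv0 _
  have hc0 : 0 < c := Real.rpow_pos_of_pos (by norm_num) _
  have hc3 : c^3 = 2 := by
    rw [hc, ← Real.rpow_natCast (2 ^ ((1:ℝ)/3)) 3, ← Real.rpow_mul (by norm_num)]
    norm_num
  have cube : ∀ x : ℝ, 0 < x → (x ^ ((1:ℝ)/3))^3 = x := by
    intro x hx
    rw [← Real.rpow_natCast (x ^ ((1:ℝ)/3)) 3, ← Real.rpow_mul hx.le]
    norm_num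
  have sq23 : ∀ x : ℝ, 0 < x → x ^ ((2:ℝ)/3) = (x ^ ((1:ℝ)/3))^2 := by
    intro x hx
    rw [← Real.rpow_natCast (x ^ ((1:ℝ)/3)) 2, ← Real.rpow_mul hx.le]
    norm_num
  have hA3 : A^3 = u := cube u hu0
  have hB3 : B^3 = 1-u := cube (1-u) hv0
  have hsqrt : Real.sqrt (81 - 12*(27*u*(1-u))) = 9*(2*u-1) := by
    rw [show 81 - 12*(27*u*(1-u)) = (9*(2*u-1))^2 by ring]
    exact Real.sqrt_sq (by linarith)
  have h27 : (27:ℝ) + 3 * (9*(2*u-1)) = 54*u := by ring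
  have h54a : ((54:ℝ)*u) ^ ((2:ℝ)/3) = 9 * c^2 * A^2 := by
    rw [Real.mul_rpow (by norm_num) hu0.le, sq23 54 (by norm_num), sq23 u hu0,
      show (54:ℝ) = 27*2 by norm_num, Real.mul_rpow (by norm_num) (by norm_num),
      show (27:ℝ) ^ ((1:ℝ)/3) = 3 by
        rw [show (27:ℝ) = 3^(3:ℕ) by norm_num, ← Real.rpow_natCast (3:ℝ) 3,
          ← Real.rpow_mul (by norm_num)]
        (try norm_num)]
    rw [← hc]; ring
  have h54b : ((54:ℝ)*u) ^ ((1:ℝ)/3) = 3 * c * A := by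
    rw [Real.mul_rpow (by norm_num) hu0.le,
      show (54:ℝ) = 27*2 by norm_num, Real.mul_rpow (by norm_num) (by norm_num),
      show (27:ℝ) ^ ((1:ℝ)/3) = 3 by
        rw [show (27:ℝ) = 3^(3:ℕ) by norm_num, ← Real.rpow_natCast (3:ℝ) 3,
          ← Real.rpow_mul (by norm_num)]
        (try norm_num)]
  have hx0 : (0:ℝ) < 27*u*(1-u) := by positivity
  have hx13 : ((27:ℝ)*u*(1-u)) ^ ((1:ℝ)/3) = 3 * A * B := by
    rw [Real.mul_rpow (by positivity) hv0.le, Real.mul_rpow (by norm_num) hu0.le,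
      show (27:ℝ) ^ ((1:ℝ)/3) = 3 by
        rw [show (27:ℝ) = 3^(3:ℕ) by norm_num, ← Real.rpow_natCast (3:ℝ) 3,
          ← Real.rpow_mul (by norm_num)]
        (try norm_num)]
  have hx23 : ((27:ℝ)*u*(1-u)) ^ ((2:ℝ)/3) = 9 * A^2 * B^2 := by
    rw [sq23 _ hx0, hx13]; ring
  have hun : u ^ (-(1:ℝ)/3) = A⁻¹ := by
    rw [show -(1:ℝ)/3 = -((1:ℝ)/3) by ring, Real.rpow_neg hu0.le, hA]
  have hun2 : u ^ (-(2:ℝ)/3) = (A^2)⁻¹ := by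
    rw [show -(2:ℝ)/3 = -((2:ℝ)/3) by ring, Real.rpow_neg hu0.le, sq23 u hu0, hA]
  have hvn : (1-u) ^ (-(1:ℝ)/3) = B⁻¹ := by
    rw [show -(1:ℝ)/3 = -((1:ℝ)/3) by ring, Real.rpow_neg hv0.le, hB]
  have hvn2 : (1-u) ^ (-(2:ℝ)/3) = (B^2)⁻¹ := by
    rw [show -(2:ℝ)/3 = -((2:ℝ)/3) by ring, Real.rpow_neg hv0.le, sq23 _ hv0, hB]
  rw [fcDensity2, hsqrt, h27, h54a, h54b, hx13, hx23, hun, hun2, hvn, hvn2, ← hc]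
  have hpi : π ≠ 0 := Real.pi_ne_zero
  field_simp
  linear_combination (162 * A) * hc3

/-- The `k`-th moment of the Fuss–Catalan density of order 2 is the Fuss–Catalan number
`(1/(2k+1)) * choose (3k) k`. -/
theorem fcDensity2_moments (k : ℕ) :
    ∫ x in (0 : ℝ)..(27 / 4 : ℝ), x ^ k * fcDensity2 x =
      (1 / (2 * k + 1) : ℝ) * (Nat.choose (3 * k) k : ℝ) := by
  set a : ℝ := (k:ℝ) - 1/3 with ha_def
  set b : ℝ := (k:ℝ) - 2/3 with hb_def
  have ha1 : (-1:ℝ) < a := by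
    have : (0:ℝ) ≤ (k:ℝ) := Nat.cast_nonneg k
    simp only [ha_def]; linarith
  have hb1 : (-1:ℝ) < b := by
    have : (0:ℝ) ≤ (k:ℝ) := Nat.cast_nonneg k
    simp only [hb_def]; linarith
  set φ : ℝ → ℝ := fun u => 27*u*(1-u) with hφ
  -- derivative
  have hderiv : ∀ u ∈ Set.Ioo (1/2:ℝ) 1, HasDerivWithinAt φ (27 - 54*u) (Set.Ioo (1/2:ℝ) 1) u := by
    intro u _
    have h : HasDerivAt φ (27 - 54*u) u := by
      have h1 : HasDerivAt (fun y : ℝ => 27 * y) 27 u := by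
        simpa using (hasDerivAt_id u).const_mul (27:ℝ)
      have h2 : HasDerivAt (fun y : ℝ => 1 - y) (-1) u := by
        simpa using (hasDerivAt_id u).const_sub (1:ℝ)
      have : HasDerivAt (fun y : ℝ => 27 * y * (1 - y)) (27 * (1 - u) + 27 * u * -1) u := h1.mul h2
      convert this using 1
      ring
    exact h.hasDerivWithinAt
  have hanti : StrictAntiOn φ (Set.Ioo (1/2:ℝ) 1) := by
    intro x hx y hy hxy
    simp only [hφ]
    nlinarith [hx.1, hy.2]
  have himg : φ '' Set.Ioo (1/2:ℝ) 1 = Set.Ioo (0:ℝ) (27/4) := by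
    apply Set.eq_of_subset_of_subset
    · rintro x ⟨u, hu, rfl⟩
      simp only [hφ]
      exact ⟨by nlinarith [hu.1, hu.2], by nlinarith [hu.1, hu.2]⟩
    · rintro x ⟨hx0, hx1⟩
      have hs0 : 0 < 81 - 12*x := by linarith
      set s := Real.sqrt (81-12*x) with hs
      have hs2 : s^2 = 81-12*x := Real.sq_sqrt hs0.le
      have hsp : 0 < s := Real.sqrt_pos.mpr hs0
      have hs9 : s < 9 := by nlinarith
      refine ⟨1/2 + s/18, ⟨by linarith, by linarith⟩, ?_⟩
      simp only [hφ]
      linear_combination (-1/12 : ℝ) * hs2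
  -- change of variables
  rw [intervalIntegral.integral_of_le (by norm_num : (0:ℝ) ≤ 27/4),
    MeasureTheory.integral_Ioc_eq_integral_Ioo, ← himg,
    integral_image_eq_integral_abs_deriv_smul measurableSet_Ioo hderiv hanti.injOn]
  -- simplify integrand
  have hcongr : Set.EqOn (fun u => |27 - 54*u| • ((φ u)^k * fcDensity2 (φ u)))
      (fun u => (3*Real.sqrt 3/(2*π) * 27^k) *
        ((2*u-1) * (u ^ a * (1-u) ^ b) - (2*u-1) * (u ^ b * (1-u) ^ a)))
      (Set.Ioo (1/2:ℝ) 1) := by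
    intro u hu
    obtain ⟨h1, h2⟩ := hu
    have hu0 : (0:ℝ) < u := by linarith
    have hv0 : (0:ℝ) < 1 - u := by linarith
    have habs : |27 - 54*u| = 27*(2*u-1) := by
      rw [abs_of_nonpos (by linarith)]; ring
    have epow : ∀ (x:ℝ) (c : ℝ), 0 < x → (x:ℝ)^k * x ^ (-c) = x ^ ((k:ℝ)-c) := by
      intro x c hx
      rw [← Real.rpow_natCast x k, ← Real.rpow_add hx]
      ring_nf
    simp only [hφ, smul_eq_mul]
    rw [habs, fcDensity2_comp h1 h2, mul_pow, mul_pow]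
    have e1 : u^k * u ^ (-(1:ℝ)/3) = u ^ a := by
      rw [ha_def, show -(1:ℝ)/3 = -(1/3:ℝ) by ring]; exact epow u (1/3) hu0
    have e2 : u^k * u ^ (-(2:ℝ)/3) = u ^ b := by
      rw [hb_def, show -(2:ℝ)/3 = -(2/3:ℝ) by ring]; exact epow u (2/3) hu0
    have e3 : (1-u)^k * (1-u) ^ (-(1:ℝ)/3) = (1-u) ^ a := by
      rw [ha_def, show -(1:ℝ)/3 = -(1/3:ℝ) by ring]; exact epow (1-u) (1/3) hv0
    have e4 : (1-u)^k * (1-u) ^ (-(2:ℝ)/3) = (1-u) ^ b := by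
      rw [hb_def, show -(2:ℝ)/3 = -(2/3:ℝ) by ring]; exact epow (1-u) (2/3) hv0
    rw [← e1, ← e2, ← e3, ← e4]
    have hpi : π ≠ 0 := Real.pi_ne_zero
    field_simp
    ring
  rw [MeasureTheory.setIntegral_congr_fun measurableSet_Ioo hcongr]
  rw [← MeasureTheory.integral_Ioc_eq_integral_Ioo,
    ← intervalIntegral.integral_of_le (by norm_num : (1:ℝ)/2 ≤ 1),
    intervalIntegral.integral_const_mul]
  -- integrability facts
  have hint1 : IntervalIntegrable (fun u : ℝ => (2*u-1) * (u ^ a * (1-u) ^ b)) volume 0 1 := by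
    apply IntervalIntegrable.continuousOn_mul (bInt ha1 hb1)
    exact (continuous_const.mul continuous_id').sub continuous_const |>.continuousOn
  have hint2 : IntervalIntegrable (fun u : ℝ => (2*u-1) * (u ^ b * (1-u) ^ a)) volume 0 1 := by
    apply IntervalIntegrable.continuousOn_mul (bInt hb1 ha1)
    exact (continuous_const.mul continuous_id').sub continuous_const |>.continuousOn
  have hsub : Set.uIcc (1/2:ℝ) 1 ⊆ Set.uIcc (0:ℝ) 1 := by
    rw [Set.uIcc_of_le (by norm_num : (1:ℝ)/2 ≤ 1), Set.uIcc_of_le (by norm_num : (0:ℝ) ≤ 1)]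
    exact Set.Icc_subset_Icc (by norm_num) le_rfl
  have hsub2 : Set.uIcc (0:ℝ) (1/2) ⊆ Set.uIcc (0:ℝ) 1 := by
    rw [Set.uIcc_of_le (by norm_num : (0:ℝ) ≤ 1/2), Set.uIcc_of_le (by norm_num : (0:ℝ) ≤ 1)]
    exact Set.Icc_subset_Icc le_rfl (by norm_num)
  -- split the integral
  rw [intervalIntegral.integral_sub (hint1.mono_set hsub) (hint2.mono_set hsub)]
  -- symmetry for second integral
  have hsym : ∫ u in (1/2:ℝ)..1, (2*u-1) * (u ^ b * (1-u) ^ a)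
      = - ∫ u in (0:ℝ)..(1/2), (2*u-1) * (u ^ a * (1-u) ^ b) := by
    have e : ∀ u : ℝ, (2*u-1) * (u ^ b * (1-u) ^ a)
        = - ((2*(1-u)-1) * ((1-u) ^ a * (1-(1-u)) ^ b)) := by
      intro u
      have : (1:ℝ)-(1-u) = u := by ring
      rw [this]; ring
    rw [intervalIntegral.integral_congr (g := fun u =>
        - ((2*(1-u)-1) * ((1-u) ^ a * (1-(1-u)) ^ b))) (fun u _ => e u),
      intervalIntegral.integral_neg,
      intervalIntegral.integral_comp_sub_left (fun u => (2*u-1) * (u ^ a * (1-u) ^ b)) 1]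
    norm_num
  rw [hsym]
  rw [sub_neg_eq_add, add_comm, intervalIntegral.integral_add_adjacent_intervals
    (hint1.mono_set hsub2) (hint1.mono_set hsub)]
  -- expand (2u-1)
  have hexp : ∫ u in (0:ℝ)..1, (2*u-1) * (u ^ a * (1-u) ^ b)
      = 2 * (∫ u in (0:ℝ)..1, u ^ (a+1) * (1-u) ^ b) - ∫ u in (0:ℝ)..1, u ^ a * (1-u) ^ b := by
    rw [← intervalIntegral.integral_const_mul,
      ← intervalIntegral.integral_sub ((bInt (by linarith : (-1:ℝ) < a+1) hb1).const_mul 2)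
        (bInt ha1 hb1)]
    apply intervalIntegral.integral_congr
    intro u hu
    rw [Set.uIcc_of_le (by norm_num : (0:ℝ) ≤ 1)] at hu
    rcases eq_or_lt_of_le hu.1 with h0 | h0
    · have hane : a ≠ 0 := by
        rw [ha_def]
        rcases Nat.eq_zero_or_pos k with hk | hk
        · subst hk; norm_num
        · have : (1:ℝ) ≤ (k:ℝ) := by exact_mod_cast hk
          intro h; linarith
      have ha1ne : a + 1 ≠ 0 := by linarith
      simp [← h0, Real.zero_rpow hane, Real.zero_rpow ha1ne]
    · have h' : u ^ (a+1) = u ^ a * u := Real.rpow_add_one (ne_of_gt h0) a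
      simp only [h']
      ring
  rw [hexp, bVal (by linarith : (-1:ℝ) < a+1) hb1, bVal ha1 hb1]
  have e1 : a+1+1 = (k:ℝ)+5/3 := by rw [ha_def]; ring
  have e2 : b+1 = (k:ℝ)+1/3 := by rw [hb_def]; ring
  have e3 : a+1 = (k:ℝ)+2/3 := by rw [ha_def]; ring
  have e4 : a+1+b+2 = ((2*k+1:ℕ):ℝ)+1 := by rw [ha_def, hb_def]; push_cast; ring
  have e5 : a+b+2 = ((2*k:ℕ):ℝ)+1 := by rw [ha_def, hb_def]; push_cast; ring
  rw [e1, e2, e4, e5, e3, Real.Gamma_nat_eq_factorial, Real.Gamma_nat_eq_factorial]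
  have h53 : Gamma ((k:ℝ)+5/3) = ((k:ℝ)+2/3) * Gamma ((k:ℝ)+2/3) := by
    rw [show (k:ℝ)+5/3 = ((k:ℝ)+2/3)+1 by ring, Real.Gamma_add_one (by positivity)]
  rw [h53]
  have R := gamma_prod k
  set G1 := Gamma ((k:ℝ)+1/3) with hG1def
  set G2 := Gamma ((k:ℝ)+2/3) with hG2def
  have hfac : (Nat.factorial (2*k+1) : ℝ) = (2*(k:ℝ)+1) * (Nat.factorial (2*k):ℝ) := by
    rw [Nat.factorial_succ]; push_cast; ring
  have hch : ((Nat.choose (3*k) k : ℕ):ℝ) * (Nat.factorial k:ℝ) * (Nat.factorial (2*k):ℝ)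
      = (Nat.factorial (3*k):ℝ) := by
    have h := Nat.choose_mul_factorial_mul_factorial (show k ≤ 3*k by omega)
    rw [show 3*k-k = 2*k by omega] at h
    exact_mod_cast congrArg (Nat.cast : ℕ → ℝ) h
  have hπ : π ≠ 0 := Real.pi_ne_zero
  have hG1 : 0 < Gamma ((k:ℝ)+1/3) := Real.Gamma_pos_of_pos (by positivity)
  have hG2 : 0 < Gamma ((k:ℝ)+2/3) := Real.Gamma_pos_of_pos (by positivity)
  have hF1 : (0:ℝ) < Nat.factorial k := by exact_mod_cast Nat.factorial_pos k
  have hF2 : (0:ℝ) < Nat.factorial (2*k) := by exact_mod_cast Nat.factorial_pos (2*k)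
  have hF3 : (0:ℝ) < Nat.factorial (3*k) := by exact_mod_cast Nat.factorial_pos (3*k)
  have hS : (0:ℝ) < Real.sqrt 3 := by positivity
  have h2k1 : (0:ℝ) < 2*(k:ℝ)+1 := by positivity
  have h27 : (0:ℝ) < (27:ℝ)^k := by positivity
  rw [hfac]
  have hkey : Real.sqrt 3 * (27:ℝ)^k * (G1*G2) * (Nat.factorial k:ℝ)
      = 2*π*(Nat.factorial (2*k):ℝ) * ((Nat.choose (3*k) k :ℕ):ℝ) * (Nat.factorial k:ℝ) := by
    linear_combination R - 2*π*hch
  have hkey2 : Real.sqrt 3 * (27:ℝ)^k * (G1*G2)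
      = 2*π*(Nat.factorial (2*k):ℝ) * ((Nat.choose (3*k) k :ℕ):ℝ) :=
    mul_right_cancel₀ (ne_of_gt hF1) hkey
  field_simp
  linear_combination hkey2
end helpers
end

section
/- For integers m ≥ 1 define the Fuss–Catalan numbers M_k = (1/(mk+1)) · binom(mk + k, k) for k ≥ 0. Then M₀ = 1 and for every k ≥ 1, M_k = Σ_{k₀ + k₁ + ⋯ + k_m = k − 1} ∏_{ν=0}^{m} M_{k_ν}, where the sum runs over all (m+1)-tuples of nonnegative integers summing to k − 1. -/
open Finset

/-- The Fuss–Catalan numbers of order `m`: `M k = (1/(mk+1)) * choose (mk+k) k`. -/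
noncomputable def fussCatalan (m k : ℕ) : ℚ :=
  (1 / (m * k + 1) : ℚ) * (Nat.choose (m * k + k) k : ℚ)

/-- Raney numbers `R(r, n) = (r/(pn+r)) C(pn+r, n)`, with `R(0, n) = δ_{n,0}`. -/
noncomputable def raney (p r n : ℕ) : ℚ :=
  if r = 0 then (if n = 0 then 1 else 0)
  else (r : ℚ) / (p * n + r) * (Nat.choose (p * n + r) n : ℚ)

lemma raney_zero (p r : ℕ) : raney p r 0 = 1 := by
  rcases Nat.eq_zero_or_pos r with h | h
  · simp [raney, h]
  · have hr : (r : ℚ) ≠ 0 := by positivity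
    simp [raney, Nat.pos_iff_ne_zero.mp h, div_self hr]

lemma raney_zero_left (p n : ℕ) (hn : n ≠ 0) : raney p 0 n = 0 := by
  simp [raney, hn]

lemma raney_formula (p r n : ℕ) (h : r ≠ 0 ∨ n ≠ 0) :
    raney p r n = (r : ℚ) / (p * n + r) * (Nat.choose (p * n + r) n : ℚ) := by
  rcases Nat.eq_zero_or_pos r with hr | hr
  · subst hr
    rcases h with h | h
    · simp at h
    · simp [raney, h]
  · simp [raney, Nat.pos_iff_ne_zero.mp hr]

/-- Pascal-type recurrence for Raney numbers. -/
lemma raney_pascal (p r n : ℕ) (hp : 1 ≤ p) :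
    raney p (r + 1) (n + 1) = raney p r (n + 1) + raney p (r + p) n := by
  have hN : n ≤ p * (n + 1) + r := by nlinarith
  have key := Nat.choose_succ_right_eq (p * (n + 1) + r) n
  have key' : ((Nat.choose (p * (n + 1) + r) (n + 1)) : ℚ) * (n + 1)
      = (Nat.choose (p * (n + 1) + r) n : ℚ) * ((p : ℚ) * (n + 1) + r - n) := by
    have h2 := congrArg (Nat.cast : ℕ → ℚ) key
    push_cast [Nat.cast_sub hN] at h2
    linarith [h2]
  rw [raney_formula p (r+1) (n+1) (Or.inl (by omega)),
      raney_formula p r (n+1) (Or.inr (by omega)),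
      raney_formula p (r+p) n (Or.inl (by omega))]
  have hsplit : (Nat.choose (p * (n + 1) + (r + 1)) (n + 1) : ℚ)
      = (Nat.choose (p * (n + 1) + r) (n + 1) : ℚ)
        + (Nat.choose (p * (n + 1) + r) n : ℚ) := by
    have h1 : p * (n + 1) + (r + 1) = (p * (n + 1) + r) + 1 := by ring
    rw [h1, Nat.choose_succ_succ' (p * (n + 1) + r) n]
    push_cast; ring
  rw [hsplit]
  have hprn : p * n + (r + p) = p * (n + 1) + r := by ring
  rw [hprn]
  have hd1 : ((p : ℚ) * (n + 1) + r) ≠ 0 := by positivity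
  have hd2 : ((p : ℚ) * (n + 1) + (r + 1)) ≠ 0 := by positivity
  push_cast
  field_simp
  linear_combination ((p:ℚ) * n + r + p) * p * key'

/-- Convolution of `raney p 1` with `raney p r`. -/
lemma raney_conv (p : ℕ) (hp : 1 ≤ p) :
    ∀ n r : ℕ, ∑ ab ∈ Finset.HasAntidiagonal.antidiagonal n, raney p 1 ab.1 * raney p r ab.2
      = raney p (r + 1) n := by
  intro n
  induction n using Nat.strong_induction_on with
  | _ n ih =>
    intro r
    induction r with
    | zero =>
      rw [Finset.sum_eq_single (n, 0)]
      · simp [raney_zero]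
      · rintro ⟨a, b⟩ hmem hne
        have hab : a + b = n := Finset.HasAntidiagonal.mem_antidiagonal.mp hmem
        have hb : b ≠ 0 := by rintro rfl; exact hne (by simp [← hab])
        simp [raney_zero_left p b hb]
      · intro h
        exact absurd (Finset.HasAntidiagonal.mem_antidiagonal.mpr (by omega)) h
    | succ r ihr =>
      rcases n with _ | n
      · simp [raney_zero]
      · rw [Finset.Nat.antidiagonal_succ', Finset.sum_cons, Finset.sum_map] at ihr ⊢
        simp only [Function.Embedding.coe_prodMap, Prod.map_fst, Prod.map_snd,
          Function.Embedding.coeFn_mk, Function.Embedding.refl_apply, id] at ihr ⊢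
        have step : ∀ ab ∈ Finset.HasAntidiagonal.antidiagonal n,
            raney p 1 ab.1 * raney p (r + 1) (Nat.succ ab.2)
            = raney p 1 ab.1 * raney p r (Nat.succ ab.2)
              + raney p 1 ab.1 * raney p (r + p) ab.2 := by
          intro ab _
          rw [raney_pascal p r ab.2 hp]; ring
        rw [Finset.sum_congr rfl step, Finset.sum_add_distrib]
        have h3 : ∑ ab ∈ Finset.HasAntidiagonal.antidiagonal n,
            raney p 1 ab.1 * raney p (r + p) ab.2 = raney p (r + p + 1) n :=
          ih n (Nat.lt_succ_self n) (r + p)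
        rw [h3]
        have hps := raney_pascal p (r + 1) n hp
        have hre : r + 1 + p = r + p + 1 := by ring
        rw [hre] at hps
        simp only [raney_zero, mul_one] at ihr ⊢
        linarith [ihr, hps]

/-- Sums over `antidiagonalTuple (k+1) n` decompose through `antidiagonal n`. -/
lemma sum_antidiagonalTuple_succ (k n : ℕ) (f : (Fin (k + 1) → ℕ) → ℚ) :
    ∑ x ∈ Finset.Nat.antidiagonalTuple (k + 1) n, f x
      = ∑ ab ∈ Finset.HasAntidiagonal.antidiagonal n,
          ∑ x ∈ Finset.Nat.antidiagonalTuple k ab.2, f (Fin.cons ab.1 x) := by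
  rw [← Finset.sum_sigma (Finset.HasAntidiagonal.antidiagonal n)
      (fun ab => Finset.Nat.antidiagonalTuple k ab.2) (fun q => f (Fin.cons q.1.1 q.2))]
  refine Finset.sum_nbij'
    (i := fun x => (⟨(x 0, ∑ i, Fin.tail x i), Fin.tail x⟩ : Σ _ab : ℕ × ℕ, Fin k → ℕ))
    (j := fun q => Fin.cons q.1.1 q.2) ?_ ?_ ?_ ?_ ?_
  · intro x hx
    rw [Finset.Nat.mem_antidiagonalTuple] at hx
    rw [Finset.mem_sigma]
    refine ⟨Finset.HasAntidiagonal.mem_antidiagonal.mpr ?_, Finset.Nat.mem_antidiagonalTuple.mpr rfl⟩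
    rw [← hx, Fin.sum_univ_succ]
    rfl
  · rintro ⟨⟨a, b⟩, x⟩ hq
    rw [Finset.mem_sigma] at hq
    obtain ⟨h1, h2⟩ := hq
    rw [Finset.HasAntidiagonal.mem_antidiagonal] at h1
    rw [Finset.Nat.mem_antidiagonalTuple] at h2 ⊢
    rw [Fin.sum_cons, h2]
    exact h1
  · intro x hx
    exact Fin.cons_self_tail x
  · rintro ⟨⟨a, b⟩, x⟩ hq
    rw [Finset.mem_sigma] at hq
    obtain ⟨h1, h2⟩ := hq
    rw [Finset.Nat.mem_antidiagonalTuple] at h2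
    simp [Fin.tail_cons, Fin.cons_zero, h2]
  · intro x hx
    exact congrArg f (Fin.cons_self_tail x).symm

/-- The multi-convolution identity for Raney numbers. -/
lemma raney_tuple (p : ℕ) (hp : 1 ≤ p) :
    ∀ s n : ℕ, ∑ x ∈ Finset.Nat.antidiagonalTuple s n, ∏ ν : Fin s, raney p 1 (x ν)
      = raney p s n := by
  intro s
  induction s with
  | zero =>
    intro n
    rcases n with _ | n
    · simp [raney_zero]
    · simp [raney_zero_left p (n + 1) (by omega)]
  | succ s ihs =>
    intro n
    rw [sum_antidiagonalTuple_succ s n (fun x => ∏ ν : Fin (s + 1), raney p 1 (x ν))]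
    have hstep : ∀ ab ∈ Finset.HasAntidiagonal.antidiagonal n,
        (∑ x ∈ Finset.Nat.antidiagonalTuple s ab.2,
          ∏ ν : Fin (s + 1), raney p 1 (Fin.cons (α := fun _ => ℕ) ab.1 x ν))
        = raney p 1 ab.1 * raney p s ab.2 := by
      intro ab _
      rw [← ihs ab.2, Finset.mul_sum]
      refine Finset.sum_congr rfl fun x _ => ?_
      rw [Fin.prod_univ_succ]
      simp [Fin.cons_succ]
    rw [Finset.sum_congr rfl hstep, raney_conv p hp n s]

lemma fussCatalan_eq_raney (m k : ℕ) : fussCatalan m k = raney (m + 1) 1 k := by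
  rw [raney_formula (m + 1) 1 k (Or.inl one_ne_zero)]
  unfold fussCatalan
  have hk : k ≤ (m + 1) * k + 1 := by nlinarith
  have hkey := Nat.choose_mul_succ_eq ((m + 1) * k) k
  have hkey' : ((Nat.choose ((m + 1) * k) k : ℚ)) * ((m : ℚ) * k + (k : ℚ) + 1)
      = (Nat.choose ((m + 1) * k + 1) k : ℚ) * ((m : ℚ) * k + 1) := by
    have h2 := congrArg (Nat.cast : ℕ → ℚ) hkey
    push_cast [Nat.cast_sub hk] at h2
    linarith [h2]
  have hmk : m * k + k = (m + 1) * k := by ring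
  have hmk1 : (m + 1) * k + 1 = (m + 1) * k + 1 := rfl
  rw [hmk]
  have hd1 : ((m : ℚ) * k + 1) ≠ 0 := by positivity
  have hd2 : ((m : ℚ) + 1) * k + 1 ≠ 0 := by positivity
  push_cast
  rw [div_mul_eq_mul_div, div_mul_eq_mul_div, div_eq_div_iff hd1 hd2]
  linear_combination hkey'

lemma raney_top (m j : ℕ) : raney (m + 1) (m + 1) j = fussCatalan m (j + 1) := by
  rw [raney_formula (m + 1) (m + 1) j (Or.inl (by omega))]
  unfold fussCatalan
  have hN : m * (j + 1) + (j + 1) = (m + 1) * j + (m + 1) := by ring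
  rw [hN]
  have hj : j ≤ (m + 1) * j + (m + 1) := by nlinarith
  have hkey := Nat.choose_succ_right_eq ((m + 1) * j + (m + 1)) j
  have hkey' : ((Nat.choose ((m + 1) * j + (m + 1)) (j + 1) : ℚ)) * ((j : ℚ) + 1)
      = (Nat.choose ((m + 1) * j + (m + 1)) j : ℚ) * ((m : ℚ) * (j + 1) + 1) := by
    have h2 := congrArg (Nat.cast : ℕ → ℚ) hkey
    push_cast [Nat.cast_sub hj] at h2
    linarith [h2]
  have hd1 : ((m : ℚ) * (j + 1) + 1) ≠ 0 := by positivity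
  have hd2 : ((m : ℚ) + 1) * j + ((m : ℚ) + 1) ≠ 0 := by positivity
  push_cast
  rw [div_mul_eq_mul_div, div_mul_eq_mul_div, div_eq_div_iff hd2 hd1]
  linear_combination (-(m:ℚ) - 1) * hkey'

/-- The Fuss–Catalan numbers satisfy `M 0 = 1` and the recurrence
`M k = ∑_{k₀+⋯+k_m = k−1} ∏_{ν=0}^{m} M_{k_ν}` for `k ≥ 1`. -/
theorem fussCatalan_recurrence (m : ℕ) (hm : 1 ≤ m) :
    fussCatalan m 0 = 1 ∧
      ∀ k : ℕ, 1 ≤ k →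
        fussCatalan m k =
          ∑ x ∈ Finset.Nat.antidiagonalTuple (m + 1) (k - 1),
            ∏ ν : Fin (m + 1), fussCatalan m (x ν) := by
  constructor
  · simp [fussCatalan]
  · intro k hk
    obtain ⟨j, rfl⟩ : ∃ j, k = j + 1 := ⟨k - 1, by omega⟩
    have hrw : ∀ x ∈ Finset.Nat.antidiagonalTuple (m + 1) (j + 1 - 1),
        ∏ ν : Fin (m + 1), fussCatalan m (x ν)
        = ∏ ν : Fin (m + 1), raney (m + 1) 1 (x ν) := by
      intro x _
      exact Finset.prod_congr rfl fun ν _ => fussCatalan_eq_raney m (x ν)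
    rw [Finset.sum_congr rfl hrw]
    have htuple := raney_tuple (m + 1) (by omega) (m + 1) j
    simp only [Nat.add_sub_cancel]
    rw [htuple, raney_top]
end
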